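/- Let W = Yᵀ Y − p I_q where Y = A + E, A ∈ ℝ^{p×q} deterministic and E an arbitrary p×q noise matrix. Let Π be an orthogonal projection of ℝ^p onto the column space of A. Then for each i = 1, …, q, |λ_i(W) − σ_i(A)²| ≤ 2 σ_i(A) ‖ΠE‖_∞ + ‖ΠE‖_∞² + ‖EᵀE − p I_q‖_∞, where λ_i(W) denotes the i-th largest eigenvalue of W. -/

import Mathlib

open Matrix Finset
open scoped RealInnerProductSpace


/-- Operator norm (largest singular value) of a real rectangular matrix. -/
noncomputable def opNorm {m n : ℕ} (A : Matrix (Fin m) (Fin n) ℝ) : ℝ :=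
  ‖LinearMap.toContinuousLinearMap (Matrix.toEuclideanLin A)‖

/-- Singular values of a real `p×q` matrix (square roots of the eigenvalues of `AᵀA`). -/
noncomputable def singvals {p q : ℕ} (A : Matrix (Fin p) (Fin q) ℝ) : Fin q → ℝ :=
  fun i => Real.sqrt ((Matrix.isHermitian_conjTranspose_mul_self A).eigenvalues i)

/-- `sortedDesc f i` is the `i`-th largest value of `f`. -/
noncomputable def sortedDesc {n : ℕ} (f : Fin n → ℝ) : Fin n → ℝ :=
  fun i => f (Tuple.sort f i.rev)

variable {n : ℕ}

lemma rayleigh_le (T : (EuclideanSpace ℝ (Fin n)) →ₗ[ℝ] EuclideanSpace ℝ (Fin n))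
    (c : OrthonormalBasis (Fin n) ℝ (EuclideanSpace ℝ (Fin n))) (d : Fin n → ℝ)
    (hT : ∀ j, T (c j) = d j • c j) (S : Set (Fin n)) (t : ℝ)
    (hS : ∀ j ∈ S, d j ≤ t) (x : EuclideanSpace ℝ (Fin n))
    (hx : x ∈ Submodule.span ℝ (c '' S)) :
    ⟪x, T x⟫ ≤ t * ‖x‖ ^ 2 := by
  set a : Fin n → ℝ := fun j => ⟪c j, x⟫ with ha
  have hzero : ∀ j ∉ S, a j = 0 := by
    intro j hj
    have : ∀ y ∈ Submodule.span ℝ (c '' S), ⟪c j, y⟫ = 0 := by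
      intro y hy
      induction hy using Submodule.span_induction with
      | mem y hy =>
        obtain ⟨k, hk, rfl⟩ := hy
        have : k ≠ j := fun h => hj (h ▸ hk)
        simpa [this] using c.orthonormal.2 (fun h => hj (h ▸ hk) : j ≠ k)
      | zero => simp
      | add y z _ _ h1 h2 => simp [inner_add_right, h1, h2]
      | smul r y _ h1 => simp [inner_smul_right, h1]
    exact this x hx
  have hxsum : x = ∑ j, a j • c j := (c.sum_repr' x).symm
  have hTx : T x = ∑ j, (a j * d j) • c j := by
    conv_lhs => rw [hxsum]
    rw [map_sum]
    simp [hT, smul_smul]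
  have hinner : ⟪x, T x⟫ = ∑ j, d j * a j ^ 2 := by
    rw [hTx, inner_sum]
    congr 1; ext j
    rw [real_inner_smul_right, real_inner_comm]
    ring
  have hnorm : ‖x‖ ^ 2 = ∑ j, a j ^ 2 := by
    rw [← real_inner_self_eq_norm_sq]
    nth_rewrite 2 [hxsum]
    rw [inner_sum]
    congr 1; ext j
    rw [real_inner_smul_right, real_inner_comm]
    ring
  rw [hinner, hnorm, Finset.mul_sum]
  apply Finset.sum_le_sum
  intro j _
  by_cases hj : j ∈ S
  · have := hS j hj
    nlinarith [sq_nonneg (a j)]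
  · simp [hzero j hj]

lemma rayleigh_ge (T : (EuclideanSpace ℝ (Fin n)) →ₗ[ℝ] EuclideanSpace ℝ (Fin n))
    (c : OrthonormalBasis (Fin n) ℝ (EuclideanSpace ℝ (Fin n))) (d : Fin n → ℝ)
    (hT : ∀ j, T (c j) = d j • c j) (S : Set (Fin n)) (t : ℝ)
    (hS : ∀ j ∈ S, t ≤ d j) (x : EuclideanSpace ℝ (Fin n))
    (hx : x ∈ Submodule.span ℝ (c '' S)) :
    t * ‖x‖ ^ 2 ≤ ⟪x, T x⟫ := by
  have := rayleigh_le (-T) c (-d) (fun j => by simp [hT j, neg_smul]) S (-t)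
    (fun j hj => neg_le_neg (hS j hj)) x hx
  simp only [LinearMap.neg_apply, inner_neg_right, Pi.neg_apply] at this
  linarith

lemma key_lemma (T T' : (EuclideanSpace ℝ (Fin n)) →ₗ[ℝ] EuclideanSpace ℝ (Fin n))
    (c c' : OrthonormalBasis (Fin n) ℝ (EuclideanSpace ℝ (Fin n))) (d d' : Fin n → ℝ)
    (hT : ∀ j, T (c j) = d j • c j) (hT' : ∀ j, T' (c' j) = d' j • c' j)
    (hd : Antitone d) (hd' : Antitone d') (i : Fin n) :
    ∃ x : EuclideanSpace ℝ (Fin n), ‖x‖ = 1 ∧ d' i ≤ ⟪x, T' x⟫ ∧ ⟪x, T x⟫ ≤ d i := by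
  set U := Submodule.span ℝ (c '' Set.Ici i) with hU
  set V := Submodule.span ℝ (c' '' Set.Iic i) with hV
  have hrU : Module.finrank ℝ U = n - i := by
    rw [hU, Set.image_eq_range]
    have li : LinearIndependent ℝ (fun x : Set.Ici i => c ↑x) :=
      (c.orthonormal.comp _ Subtype.val_injective).linearIndependent
    rw [finrank_span_eq_card li]
    exact (Fintype.card_eq.mpr ⟨Equiv.refl _⟩).trans ((Fintype.card_Ici i).trans (Fin.card_Ici i))
  have hrV : Module.finrank ℝ V = i + 1 := by
    rw [hV, Set.image_eq_range]
    have li : LinearIndependent ℝ (fun x : Set.Iic i => c' ↑x) :=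
      (c'.orthonormal.comp _ Subtype.val_injective).linearIndependent
    rw [finrank_span_eq_card li]
    exact (Fintype.card_eq.mpr ⟨Equiv.refl _⟩).trans ((Fintype.card_Iic i).trans (Fin.card_Iic i))
  have hinf : 0 < Module.finrank ℝ (U ⊓ V : Submodule ℝ (EuclideanSpace ℝ (Fin n))) := by
    have hsum := Submodule.finrank_sup_add_finrank_inf_eq U V
    have hle : Module.finrank ℝ (U ⊔ V : Submodule ℝ (EuclideanSpace ℝ (Fin n))) ≤ n := by
      have := Submodule.finrank_le (U ⊔ V)
      simpa [finrank_euclideanSpace] using this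
    have hi : (i : ℕ) < n := i.isLt
    omega
  have hbot : (U ⊓ V : Submodule ℝ (EuclideanSpace ℝ (Fin n))) ≠ ⊥ := by
    intro h
    rw [h] at hinf
    simp at hinf
  obtain ⟨y, hy, hy0⟩ := Submodule.exists_mem_ne_zero_of_ne_bot hbot
  set x : EuclideanSpace ℝ (Fin n) := ‖y‖⁻¹ • y with hx
  have hxnorm : ‖x‖ = 1 := norm_smul_inv_norm hy0
  have hxU : x ∈ U := U.smul_mem _ (Submodule.mem_inf.mp hy).1
  have hxV : x ∈ V := V.smul_mem _ (Submodule.mem_inf.mp hy).2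
  refine ⟨x, hxnorm, ?_, ?_⟩
  · have := rayleigh_ge T' c' d' hT' (Set.Iic i) (d' i)
      (fun j hj => hd' hj) x hxV
    rw [hxnorm] at this
    simpa using this
  · have := rayleigh_le T c d hT (Set.Ici i) (d i)
      (fun j hj => hd hj) x hxU
    rw [hxnorm] at this
    simpa using this

lemma opNorm_nonneg {m k : ℕ} (B : Matrix (Fin m) (Fin k) ℝ) : 0 ≤ opNorm B :=
  norm_nonneg _

lemma apply_norm_le {m k : ℕ} (B : Matrix (Fin m) (Fin k) ℝ) (x : EuclideanSpace ℝ (Fin k)) :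
    ‖Matrix.toEuclideanLin B x‖ ≤ opNorm B * ‖x‖ := by
  have := (LinearMap.toContinuousLinearMap (Matrix.toEuclideanLin B)).le_opNorm x
  simpa [opNorm] using this

lemma abs_inner_le_opNorm {m : ℕ} (D : Matrix (Fin m) (Fin m) ℝ)
    (x : EuclideanSpace ℝ (Fin m)) (hx : ‖x‖ = 1) :
    |⟪x, Matrix.toEuclideanLin D x⟫| ≤ opNorm D := by
  calc |⟪x, Matrix.toEuclideanLin D x⟫| ≤ ‖x‖ * ‖Matrix.toEuclideanLin D x‖ :=
        abs_real_inner_le_norm _ _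
    _ ≤ ‖x‖ * (opNorm D * ‖x‖) := by
        exact mul_le_mul_of_nonneg_left (apply_norm_le D x) (norm_nonneg x)
    _ = opNorm D := by rw [hx]; ring

lemma inner_transpose_mul_self {m k : ℕ} (X : Matrix (Fin m) (Fin k) ℝ)
    (x : EuclideanSpace ℝ (Fin k)) :
    ⟪x, Matrix.toEuclideanLin (Xᵀ * X) x⟫ = ‖Matrix.toEuclideanLin X x‖ ^ 2 := by
  have hcomp : Matrix.toEuclideanLin (Xᵀ * X) x
      = Matrix.toEuclideanLin Xᵀ (Matrix.toEuclideanLin X x) := by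
    simp [Matrix.toEuclideanLin_apply, Matrix.mulVec_mulVec]
  rw [hcomp, (by rw [Matrix.conjTranspose_eq_transpose_of_trivial] :
      (Xᵀ : Matrix (Fin k) (Fin m) ℝ) = Xᴴ),
    Matrix.toEuclideanLin_conjTranspose_eq_adjoint, LinearMap.adjoint_inner_right,
    real_inner_self_eq_norm_sq]

lemma sortedDesc_antitone (f : Fin n → ℝ) : Antitone (sortedDesc f) := by
  intro j k hjk
  exact Tuple.monotone_sort f (Fin.rev_le_rev.mpr hjk)

lemma exists_sorted_basis {H : Matrix (Fin n) (Fin n) ℝ} (hH : H.IsHermitian)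
    (f : Fin n → ℝ) :
    ∃ c : OrthonormalBasis (Fin n) ℝ (EuclideanSpace ℝ (Fin n)),
      ∀ j, Matrix.toEuclideanLin H (c j)
        = hH.eigenvalues (Tuple.sort f j.rev) • c j := by
  set e : Equiv.Perm (Fin n) := Fin.revPerm.trans (Tuple.sort f) with he
  refine ⟨hH.eigenvectorBasis.reindex e.symm, fun j => ?_⟩
  have hj : (hH.eigenvectorBasis.reindex e.symm) j = hH.eigenvectorBasis (e j) := by
    rw [OrthonormalBasis.reindex_apply, Equiv.symm_symm]
  rw [hj]
  have hmv := hH.mulVec_eigenvectorBasis (e j)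
  have hej : e j = Tuple.sort f j.rev := rfl
  rw [hej] at hmv ⊢
  rw [Matrix.toEuclideanLin_apply]
  exact congrArg _ hmv

set_option maxHeartbeats 1000000 in
theorem eigenvalue_perturbation_bound (p q : ℕ) (hpq : q ≤ p)
    (A E : Matrix (Fin p) (Fin q) ℝ) (P : Matrix (Fin p) (Fin p) ℝ)
    (hPidem : P * P = P) (hPsym : Pᵀ = P)
    (hPrange : LinearMap.range P.mulVecLin = LinearMap.range A.mulVecLin)
    (hW : ((A + E)ᵀ * (A + E) - (p : ℝ) • (1 : Matrix (Fin q) (Fin q) ℝ)).IsHermitian)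
    (i : Fin q) :
    |sortedDesc hW.eigenvalues i - (sortedDesc (singvals A) i) ^ 2|
      ≤ 2 * sortedDesc (singvals A) i * opNorm (P * E) + opNorm (P * E) ^ 2
        + opNorm (Eᵀ * E - (p : ℝ) • (1 : Matrix (Fin q) (Fin q) ℝ)) := by
  classical
  set B := P * E with hB
  -- P fixes the range of A
  have hPA : P * A = A := by
    have hmv : ∀ x, (P * A) *ᵥ x = A *ᵥ x := by
      intro x
      have hmem : A *ᵥ x ∈ LinearMap.range P.mulVecLin := by
        rw [hPrange]; exact ⟨x, rfl⟩
      obtain ⟨y, hy⟩ := hmem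
      rw [Matrix.mulVecLin_apply] at hy
      have h1 : P *ᵥ (A *ᵥ x) = A *ᵥ x := by
        rw [← hy, Matrix.mulVec_mulVec, hPidem]
      rw [← Matrix.mulVec_mulVec]
      exact h1
    ext i j
    have := congrFun (hmv (Pi.single j 1)) i
    simpa [Matrix.mulVec_single] using this
  have h1 : Aᵀ * B = Aᵀ * E := by
    rw [hB, ← Matrix.mul_assoc]
    congr 1
    calc Aᵀ * P = Aᵀ * Pᵀ := by rw [hPsym]
      _ = (P * A)ᵀ := by rw [Matrix.transpose_mul]
      _ = Aᵀ := by rw [hPA]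
  have h2 : Bᵀ * A = Eᵀ * A := by
    have := congrArg Matrix.transpose h1
    simpa [Matrix.transpose_mul] using this
  have hkey : (A + E)ᵀ * (A + E) - (p : ℝ) • (1 : Matrix (Fin q) (Fin q) ℝ)
      = (A + B)ᵀ * (A + B)
        + (Eᵀ * E - (p : ℝ) • (1 : Matrix (Fin q) (Fin q) ℝ) - Bᵀ * B) := by
    simp only [Matrix.transpose_add, Matrix.add_mul, Matrix.mul_add, h1, h2]
    abel
  have hM : ((A + B)ᵀ * (A + B)).IsHermitian := by
    have := Matrix.isHermitian_conjTranspose_mul_self (A + B)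
    rwa [Matrix.conjTranspose_eq_transpose_of_trivial] at this
  have hA2 : (Aᵀ * A).IsHermitian := by
    have := Matrix.isHermitian_conjTranspose_mul_self A
    rwa [Matrix.conjTranspose_eq_transpose_of_trivial] at this
  -- eigenvalues of the Gram matrices are the squares of the singular values
  have hMpsd : ((A + B)ᵀ * (A + B)).PosSemidef := by
    have := Matrix.posSemidef_conjTranspose_mul_self (A + B)
    rwa [Matrix.conjTranspose_eq_transpose_of_trivial] at this
  have hApsd : (Aᵀ * A).PosSemidef := by
    have := Matrix.posSemidef_conjTranspose_mul_self A
    rwa [Matrix.conjTranspose_eq_transpose_of_trivial] at this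
  have hMeig : ∀ j, hM.eigenvalues (Tuple.sort (singvals (A + B)) j.rev)
      = (sortedDesc (singvals (A + B)) j) ^ 2 := by
    intro j
    have h0 : 0 ≤ hM.eigenvalues (Tuple.sort (singvals (A + B)) j.rev) :=
      hMpsd.eigenvalues_nonneg _
    have hr : sortedDesc (singvals (A + B)) j
        = Real.sqrt (hM.eigenvalues (Tuple.sort (singvals (A + B)) j.rev)) := rfl
    rw [hr, Real.sq_sqrt h0]
  have hAeig : ∀ j, hA2.eigenvalues (Tuple.sort (singvals A) j.rev)
      = (sortedDesc (singvals A) j) ^ 2 := by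
    intro j
    have h0 : 0 ≤ hA2.eigenvalues (Tuple.sort (singvals A) j.rev) :=
      hApsd.eigenvalues_nonneg _
    have hr : sortedDesc (singvals A) j
        = Real.sqrt (hA2.eigenvalues (Tuple.sort (singvals A) j.rev)) := rfl
    rw [hr, Real.sq_sqrt h0]
  -- sorted eigenbases
  obtain ⟨cW, hcW⟩ := exists_sorted_basis hW hW.eigenvalues
  obtain ⟨cM, hcM⟩ := exists_sorted_basis hM (singvals (A + B))
  obtain ⟨cA, hcA⟩ := exists_sorted_basis hA2 (singvals A)
  have hcM' : ∀ j, Matrix.toEuclideanLin ((A + B)ᵀ * (A + B)) (cM j)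
      = ((sortedDesc (singvals (A + B)) j) ^ 2) • cM j := by
    intro j; rw [hcM j, hMeig j]
  have hcA' : ∀ j, Matrix.toEuclideanLin (Aᵀ * A) (cA j)
      = ((sortedDesc (singvals A) j) ^ 2) • cA j := by
    intro j; rw [hcA j, hAeig j]
  have hcW' : ∀ j, Matrix.toEuclideanLin
        ((A + E)ᵀ * (A + E) - (p : ℝ) • (1 : Matrix (Fin q) (Fin q) ℝ)) (cW j)
      = (sortedDesc hW.eigenvalues j) • cW j := fun j => hcW j
  -- nonnegativity and antitonicity
  have hsnnA : ∀ j, 0 ≤ sortedDesc (singvals A) j := fun j => Real.sqrt_nonneg _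
  have hsnnM : ∀ j, 0 ≤ sortedDesc (singvals (A + B)) j := fun j => Real.sqrt_nonneg _
  have hantiA : Antitone (fun j => (sortedDesc (singvals A) j) ^ 2) := by
    intro j k hjk
    dsimp only
    have h1 := sortedDesc_antitone (singvals A) hjk
    nlinarith [hsnnA j, hsnnA k]
  have hantiM : Antitone (fun j => (sortedDesc (singvals (A + B)) j) ^ 2) := by
    intro j k hjk
    dsimp only
    have h1 := sortedDesc_antitone (singvals (A + B)) hjk
    nlinarith [hsnnM j, hsnnM k]
  have hantiW : Antitone (sortedDesc hW.eigenvalues) := sortedDesc_antitone _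
  set s := sortedDesc (singvals A) i with hs
  set σ := sortedDesc (singvals (A + B)) i with hσ
  set lW := sortedDesc hW.eigenvalues i with hlW
  set ν := opNorm B with hν
  set ρ := opNorm (Eᵀ * E - (p : ℝ) • (1 : Matrix (Fin q) (Fin q) ℝ)) with hρ
  have hν0 : 0 ≤ ν := opNorm_nonneg B
  have hρ0 : 0 ≤ ρ := opNorm_nonneg _
  -- singular value Weyl: σ ≤ s + ν
  have hsv : σ ≤ s + ν := by
    obtain ⟨x, hx1, hx2, hx3⟩ := key_lemma (Matrix.toEuclideanLin (Aᵀ * A))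
      (Matrix.toEuclideanLin ((A + B)ᵀ * (A + B))) cA cM
      (fun j => (sortedDesc (singvals A) j) ^ 2)
      (fun j => (sortedDesc (singvals (A + B)) j) ^ 2)
      hcA' hcM' hantiA hantiM i
    rw [inner_transpose_mul_self] at hx2 hx3
    have hBx : ‖Matrix.toEuclideanLin B x‖ ≤ ν := by
      have := apply_norm_le B x; rw [hx1] at this; linarith
    have hAx : ‖Matrix.toEuclideanLin A x‖ ≤ s := by
      nlinarith [norm_nonneg (Matrix.toEuclideanLin A x), hsnnA i]
    have hadd : Matrix.toEuclideanLin (A + B) x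
        = Matrix.toEuclideanLin A x + Matrix.toEuclideanLin B x := by
      rw [map_add]; rfl
    have hABx : ‖Matrix.toEuclideanLin (A + B) x‖ ≤ s + ν := by
      rw [hadd]
      calc ‖Matrix.toEuclideanLin A x + Matrix.toEuclideanLin B x‖
          ≤ ‖Matrix.toEuclideanLin A x‖ + ‖Matrix.toEuclideanLin B x‖ := norm_add_le _ _
        _ ≤ s + ν := by linarith
    nlinarith [hsnnM i, norm_nonneg (Matrix.toEuclideanLin (A + B) x), hsnnA i]
  -- singular value Weyl: s ≤ σ + ν
  have hsv' : s ≤ σ + ν := by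
    obtain ⟨x, hx1, hx2, hx3⟩ := key_lemma (Matrix.toEuclideanLin ((A + B)ᵀ * (A + B)))
      (Matrix.toEuclideanLin (Aᵀ * A)) cM cA
      (fun j => (sortedDesc (singvals (A + B)) j) ^ 2)
      (fun j => (sortedDesc (singvals A) j) ^ 2)
      hcM' hcA' hantiM hantiA i
    rw [inner_transpose_mul_self] at hx2 hx3
    have hBx : ‖Matrix.toEuclideanLin B x‖ ≤ ν := by
      have := apply_norm_le B x; rw [hx1] at this; linarith
    have hABx : ‖Matrix.toEuclideanLin (A + B) x‖ ≤ σ := by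
      nlinarith [norm_nonneg (Matrix.toEuclideanLin (A + B) x), hsnnM i]
    have hsub : Matrix.toEuclideanLin A x
        = Matrix.toEuclideanLin (A + B) x - Matrix.toEuclideanLin B x := by
      rw [← LinearMap.sub_apply, ← map_sub, add_sub_cancel_right]
    have hAx : ‖Matrix.toEuclideanLin A x‖ ≤ σ + ν := by
      rw [hsub]
      calc ‖Matrix.toEuclideanLin (A + B) x - Matrix.toEuclideanLin B x‖
          ≤ ‖Matrix.toEuclideanLin (A + B) x‖ + ‖Matrix.toEuclideanLin B x‖ :=
            norm_sub_le _ _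
        _ ≤ σ + ν := by linarith
    nlinarith [hsnnA i, norm_nonneg (Matrix.toEuclideanLin A x), hsnnM i]
  -- inner product splitting along hkey
  have hsplit : ∀ x : EuclideanSpace ℝ (Fin q), ‖x‖ = 1 →
      ⟪x, Matrix.toEuclideanLin
        ((A + E)ᵀ * (A + E) - (p : ℝ) • (1 : Matrix (Fin q) (Fin q) ℝ)) x⟫
      = ⟪x, Matrix.toEuclideanLin ((A + B)ᵀ * (A + B)) x⟫
        + ⟪x, Matrix.toEuclideanLin
            (Eᵀ * E - (p : ℝ) • (1 : Matrix (Fin q) (Fin q) ℝ)) x⟫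
        - ‖Matrix.toEuclideanLin B x‖ ^ 2 := by
    intro x hx1
    rw [hkey, map_add, map_sub, LinearMap.add_apply, LinearMap.sub_apply,
      inner_add_right, inner_sub_right, inner_transpose_mul_self,
      inner_transpose_mul_self]
    ring
  -- eigenvalue Weyl (upper): lW ≤ σ^2 + ρ
  have hW1 : lW ≤ σ ^ 2 + ρ := by
    obtain ⟨x, hx1, hx2, hx3⟩ := key_lemma
      (Matrix.toEuclideanLin ((A + B)ᵀ * (A + B)))
      (Matrix.toEuclideanLin
        ((A + E)ᵀ * (A + E) - (p : ℝ) • (1 : Matrix (Fin q) (Fin q) ℝ)))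
      cM cW (fun j => (sortedDesc (singvals (A + B)) j) ^ 2)
      (sortedDesc hW.eigenvalues) hcM' hcW' hantiM hantiW i
    have hsp := hsplit x hx1
    have hD := abs_inner_le_opNorm
      (Eᵀ * E - (p : ℝ) • (1 : Matrix (Fin q) (Fin q) ℝ)) x hx1
    rw [abs_le] at hD
    nlinarith [sq_nonneg ‖Matrix.toEuclideanLin B x‖]
  -- eigenvalue Weyl (lower): σ^2 ≤ lW + ρ + ν^2
  have hW2 : σ ^ 2 ≤ lW + ρ + ν ^ 2 := by
    obtain ⟨x, hx1, hx2, hx3⟩ := key_lemma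
      (Matrix.toEuclideanLin
        ((A + E)ᵀ * (A + E) - (p : ℝ) • (1 : Matrix (Fin q) (Fin q) ℝ)))
      (Matrix.toEuclideanLin ((A + B)ᵀ * (A + B)))
      cW cM (sortedDesc hW.eigenvalues)
      (fun j => (sortedDesc (singvals (A + B)) j) ^ 2) hcW' hcM' hantiW hantiM i
    have hsp := hsplit x hx1
    have hD := abs_inner_le_opNorm
      (Eᵀ * E - (p : ℝ) • (1 : Matrix (Fin q) (Fin q) ℝ)) x hx1
    rw [abs_le] at hD
    have hBx : ‖Matrix.toEuclideanLin B x‖ ≤ ν := by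
      have := apply_norm_le B x; rw [hx1] at this; linarith
    nlinarith [norm_nonneg (Matrix.toEuclideanLin B x)]
  rw [abs_le]
  constructor
  · nlinarith [hsnnA i, hsnnM i, mul_le_mul_of_nonneg_left hsv' (hsnnA i),
      sq_nonneg (s - σ)]
  · nlinarith [hsnnA i, hsnnM i]
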